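/- Let w : ℤ² → ℝ be nonnegative spatial weights with w(0) = ω₀ > 0, let f : ℤ² → [0, R] be an image with integer values, and let φ, φ̂ : ℤ → ℝ satisfy |φ(t) - φ̂(t)| ≤ ε for all integers t with |t| ≤ R, where 0 ≤ φ ≤ 1, φ(0) = 1, and 0 < ε < ω₀ / (∑_j w(j)). Define BF(i) = (∑_j w(j) φ(f(i-j) - f(i)) f(i-j)) / (∑_j w(j) φ(f(i-j) - f(i))) and similarly B̂F(i) with φ̂ in place of φ, where the sums are over a finite window. Then for every pixel i, |BF(i) - B̂F(i)| ≤ 2 R W ε / (ω₀ - W ε), where W = ∑_j w(j). -/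
import Mathlib


theorem stmt_1 (R : ℕ) (hR : 0 < R) (J : Finset (ℤ × ℤ)) (h0J : (0, 0) ∈ J)
    (w : ℤ × ℤ → ℝ) (hw : ∀ j, 0 ≤ w j) (ω₀ : ℝ) (hw0 : w (0, 0) = ω₀) (hω : 0 < ω₀)
    (f : ℤ × ℤ → ℤ) (hf : ∀ i, 0 ≤ f i ∧ f i ≤ (R : ℤ))
    (φ φhat : ℤ → ℝ) (hφ01 : ∀ t, 0 ≤ φ t ∧ φ t ≤ 1) (hφ0 : φ 0 = 1)
    (ε : ℝ) (hε : 0 < ε)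
    (happrox : ∀ t : ℤ, |t| ≤ (R : ℤ) → |φ t - φhat t| ≤ ε)
    (W : ℝ) (hW : W = ∑ j ∈ J, w j) (hεW : ε < ω₀ / W) :
    ∀ i : ℤ × ℤ,
      |(∑ j ∈ J, w j * φ (f (i - j) - f i) * (f (i - j) : ℝ)) /
            (∑ j ∈ J, w j * φ (f (i - j) - f i)) -
          (∑ j ∈ J, w j * φhat (f (i - j) - f i) * (f (i - j) : ℝ)) /
            (∑ j ∈ J, w j * φhat (f (i - j) - f i))| ≤
        2 * R * W * ε / (ω₀ - W * ε) := by
  intro i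
  set N := ∑ j ∈ J, w j * φ (f (i - j) - f i) * (f (i - j) : ℝ) with hN
  set D := ∑ j ∈ J, w j * φ (f (i - j) - f i) with hD
  set Nh := ∑ j ∈ J, w j * φhat (f (i - j) - f i) * (f (i - j) : ℝ) with hNh
  set Dh := ∑ j ∈ J, w j * φhat (f (i - j) - f i) with hDh
  have hWpos : 0 < W := by
    have := Finset.single_le_sum (f := w) (fun j _ => hw j) h0J
    rw [← hW] at this; linarith [hw0 ▸ this]
  have hWε : W * ε < ω₀ := by
    rw [lt_div_iff₀ hWpos] at hεW; linarith
  have habs : ∀ j : ℤ × ℤ, |f (i - j) - f i| ≤ (R : ℤ) := fun j => by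
    have h1 := hf (i - j); have h2 := hf i
    rw [abs_le]; constructor <;> linarith [h1.1, h1.2, h2.1, h2.2]
  have hφε : ∀ j : ℤ × ℤ, |φ (f (i - j) - f i) - φhat (f (i - j) - f i)| ≤ ε :=
    fun j => happrox _ (habs j)
  have hfR : ∀ j : ℤ × ℤ, (0 : ℝ) ≤ (f (i - j) : ℝ) ∧ (f (i - j) : ℝ) ≤ R := fun j => by
    have := hf (i - j)
    exact ⟨by exact_mod_cast this.1, by exact_mod_cast this.2⟩
  -- D ≥ ω₀
  have hDlb : ω₀ ≤ D := by
    have h := Finset.single_le_sum (f := fun j => w j * φ (f (i - j) - f i))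
      (fun j _ => mul_nonneg (hw j) (hφ01 _).1) h0J
    have hw0' : w 0 = ω₀ := hw0
    simpa [Prod.mk_zero_zero, hw0', hφ0] using h
  have hDpos : 0 < D := lt_of_lt_of_le hω hDlb
  -- |D - Dh| ≤ W ε
  have hDdiff : |D - Dh| ≤ W * ε := by
    rw [hD, hDh, ← Finset.sum_sub_distrib]
    calc |∑ j ∈ J, (w j * φ (f (i - j) - f i) - w j * φhat (f (i - j) - f i))|
        ≤ ∑ j ∈ J, |w j * φ (f (i - j) - f i) - w j * φhat (f (i - j) - f i)| :=
          Finset.abs_sum_le_sum_abs _ _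
      _ ≤ ∑ j ∈ J, w j * ε := by
          apply Finset.sum_le_sum
          intro j _
          rw [← mul_sub, abs_mul, abs_of_nonneg (hw j)]
          exact mul_le_mul_of_nonneg_left (hφε j) (hw j)
      _ = W * ε := by rw [hW, Finset.sum_mul]
  have hDhlb : ω₀ - W * ε ≤ Dh := by
    have := abs_le.mp hDdiff
    linarith [this.1, this.2]
  have hDhpos : 0 < Dh := lt_of_lt_of_le (by linarith) hDhlb
  -- |N - Nh| ≤ R W ε
  have hNdiff : |N - Nh| ≤ R * (W * ε) := by
    rw [hN, hNh, ← Finset.sum_sub_distrib]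
    calc |∑ j ∈ J, (w j * φ (f (i - j) - f i) * (f (i - j) : ℝ) -
            w j * φhat (f (i - j) - f i) * (f (i - j) : ℝ))|
        ≤ ∑ j ∈ J, |w j * φ (f (i - j) - f i) * (f (i - j) : ℝ) -
            w j * φhat (f (i - j) - f i) * (f (i - j) : ℝ)| :=
          Finset.abs_sum_le_sum_abs _ _
      _ ≤ ∑ j ∈ J, w j * ε * R := by
          apply Finset.sum_le_sum
          intro j _
          have : w j * φ (f (i - j) - f i) * (f (i - j) : ℝ) -
              w j * φhat (f (i - j) - f i) * (f (i - j) : ℝ) =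
              w j * (φ (f (i - j) - f i) - φhat (f (i - j) - f i)) * (f (i - j) : ℝ) := by ring
          rw [this, abs_mul, abs_mul, abs_of_nonneg (hw j),
            abs_of_nonneg (hfR j).1]
          exact mul_le_mul (mul_le_mul_of_nonneg_left (hφε j) (hw j)) (hfR j).2
            (hfR j).1 (mul_nonneg (hw j) hε.le)
      _ = R * (W * ε) := by
          simp only [hW, Finset.sum_mul, Finset.mul_sum]
          exact Finset.sum_congr rfl fun j _ => by ring
  -- 0 ≤ N ≤ R D
  have hNnn : 0 ≤ N :=
    Finset.sum_nonneg fun j _ =>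
      mul_nonneg (mul_nonneg (hw j) (hφ01 _).1) (hfR j).1
  have hNub : N ≤ R * D := by
    rw [hN, hD, Finset.mul_sum]
    apply Finset.sum_le_sum
    intro j _
    rw [mul_comm (R : ℝ)]
    exact mul_le_mul_of_nonneg_left (hfR j).2 (mul_nonneg (hw j) (hφ01 _).1)
  have haR : |N / D| ≤ R := by
    rw [abs_div, abs_of_nonneg hNnn, abs_of_pos hDpos, div_le_iff₀ hDpos]
    linarith
  -- key identity
  have hDne : D ≠ 0 := ne_of_gt hDpos
  have hDhne : Dh ≠ 0 := ne_of_gt hDhpos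
  have hkey : N / D - Nh / Dh = ((N / D) * (Dh - D) + (N - Nh)) / Dh := by
    field_simp
    ring
  rw [hkey]
  have hnum : |(N / D) * (Dh - D) + (N - Nh)| ≤ 2 * R * W * ε := by
    calc |(N / D) * (Dh - D) + (N - Nh)| ≤ |(N / D) * (Dh - D)| + |N - Nh| := abs_add_le _ _
      _ = |N / D| * |Dh - D| + |N - Nh| := by rw [abs_mul]
      _ ≤ R * (W * ε) + R * (W * ε) := by
          have hd : |Dh - D| ≤ W * ε := abs_sub_comm D Dh ▸ hDdiff
          exact add_le_add (mul_le_mul haR hd (abs_nonneg _) (Nat.cast_nonneg R)) hNdiff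
      _ = 2 * R * W * ε := by ring
  rw [abs_div, abs_of_pos hDhpos]
  exact div_le_div₀ (by positivity) hnum (by linarith) hDhlb
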